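/- Let B : [0,1] → ℝ be continuous with B(0) = 0, and suppose there exist B-solutions u, v with u(0) = 0, u(1) = 1, v(0) = 1, v(1) = 0. If w ∈ H1 satisfies E(w,h) = 0 for every h ∈ H1, then w(x) = 0 for all x ∈ [0,1]. (Uniqueness of the weak solution of the homogeneous Dirichlet problem Lw = 0.) -/

import Mathlib

open MeasureTheory intervalIntegral

/-- `u` is a pathwise (`B`-)solution of the homogeneous equation `-u'' + B'·u = 0`. -/
def IsBSolution (B u u' : ℝ → ℝ) : Prop :=
  (∀ x ∈ Set.Icc (0:ℝ) 1, HasDerivWithinAt u (u' x) (Set.Icc 0 1) x) ∧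
  ContinuousOn u' (Set.Icc 0 1) ∧
  ∀ x ∈ Set.Icc (0:ℝ) 1, u' x = u' 0 + u x * B x - ∫ y in (0:ℝ)..x, u' y * B y

/-- `h` belongs to `H1` with (a.e.) derivative `g`: `h` is absolutely continuous on
`[0,1]` with `h(0) = h(1) = 0`, i.e. `h(x) = ∫_0^x g` for an integrable `g` with
`∫_0^1 g = 0`. -/
def MemH1 (h g : ℝ → ℝ) : Prop :=
  MeasureTheory.IntegrableOn g (Set.Icc 0 1) ∧
  (∫ t in (0:ℝ)..1, g t) = 0 ∧
  ∀ x ∈ Set.Icc (0:ℝ) 1, h x = ∫ t in (0:ℝ)..x, g t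

/-- The pathwise bilinear form `E(f,h)`, the weak meaning of `⟨Lf, h⟩` for
`L = -d²/dx² + B'`; here `f'` and `h'` are the derivatives of `f` and `h`. -/
noncomputable def Eform (B f f' h h' : ℝ → ℝ) : ℝ :=
  (∫ x in (0:ℝ)..1, f' x * h' x) -
    ∫ x in (0:ℝ)..1, (f' x * h x + f x * h' x) * B x

/-- The Green operator `T` built from the independent solutions `u`, `v` and the
Wronskian `α`: `(Tf)(x) = α⁻¹·(v(x)·∫_0^x u f + u(x)·∫_x^1 v f)`. -/
noncomputable def greenOp (α : ℝ) (u v f : ℝ → ℝ) (x : ℝ) : ℝ :=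
  α⁻¹ * (v x * (∫ y in (0:ℝ)..x, u y * f y) + u x * (∫ y in x..(1:ℝ), v y * f y))

/-- The derivative of `Tf`:
`(Tf)'(x) = α⁻¹·(v'(x)·∫_0^x u f + u'(x)·∫_x^1 v f)`. -/
noncomputable def greenOpDeriv (α : ℝ) (u u' v v' f : ℝ → ℝ) (x : ℝ) : ℝ :=
  α⁻¹ * (v' x * (∫ y in (0:ℝ)..x, u y * f y) + u' x * (∫ y in x..(1:ℝ), v y * f y))

section AuxiliaryLemmas
open Set

lemma measurable_real_sign : Measurable Real.sign := by
  have h : Real.sign = fun r : ℝ => if r < 0 then (-1:ℝ) else if 0 < r then 1 else 0 := by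
    funext r; rfl
  rw [h]
  exact Measurable.ite measurableSet_Iio measurable_const
    (Measurable.ite measurableSet_Ioi measurable_const measurable_const)

lemma abs_real_sign_le_one (y : ℝ) : |Real.sign y| ≤ 1 := by
  rcases lt_trichotomy y 0 with h | h | h
  · simp [Real.sign_of_neg h]
  · simp [h, Real.sign_zero]
  · simp [Real.sign_of_pos h]

lemma mul_real_sign_self (y : ℝ) : y * Real.sign y = |y| := by
  rcases lt_trichotomy y 0 with h | h | h
  · rw [Real.sign_of_neg h, abs_of_neg h]; ring
  · simp [h]
  · rw [Real.sign_of_pos h, abs_of_pos h]; ring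

lemma phi_ae_const {φ : ℝ → ℝ} (hφ : MeasureTheory.IntegrableOn φ (Set.Ioc 0 1))
    (hkey : ∀ g : ℝ → ℝ, Measurable g → (∃ C, ∀ t, |g t| ≤ C) →
      (∫ t in Set.Ioc (0:ℝ) 1, g t) = 0 → (∫ t in Set.Ioc (0:ℝ) 1, φ t * g t) = 0) :
    φ =ᵐ[MeasureTheory.volume.restrict (Set.Ioc (0:ℝ) 1)]
      fun _ => ∫ t in Set.Ioc (0:ℝ) 1, φ t := by
  set μ := volume.restrict (Set.Ioc (0:ℝ) 1) with hμ
  set c : ℝ := ∫ t in Set.Ioc (0:ℝ) 1, φ t with hc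
  have hμuniv : μ Set.univ = 1 := by
    rw [hμ, Measure.restrict_apply_univ, Real.volume_Ioc]
    norm_num
  have hm : AEStronglyMeasurable φ μ := hφ.1
  set ψ := hm.mk φ with hψdef
  have hψ : φ =ᵐ[μ] ψ := hm.ae_eq_mk
  have hψm : StronglyMeasurable ψ := hm.stronglyMeasurable_mk
  set s : ℝ → ℝ := fun t => Real.sign (ψ t - c) with hs
  have hsmeas : Measurable s := measurable_real_sign.comp (hψm.measurable.sub measurable_const)
  have hsb : ∀ t, |s t| ≤ 1 := fun t => abs_real_sign_le_one _
  have hconst_int : ∀ k : ℝ, Integrable (fun _ => k) μ :=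
    fun k => integrableOn_const measure_Ioc_lt_top.ne
  have hs_int : Integrable s μ :=
    Integrable.mono' (hconst_int 1) hsmeas.aestronglyMeasurable
      (ae_of_all _ fun t => by simpa using hsb t)
  set sb : ℝ := ∫ t, s t ∂μ with hsbdef
  set g : ℝ → ℝ := fun t => s t - sb with hg
  have hgm : Measurable g := hsmeas.sub measurable_const
  have hgb : ∀ t, |g t| ≤ 1 + |sb| := fun t =>
    (abs_sub (s t) sb).trans (add_le_add_left (hsb t) _)
  have hg0 : (∫ t in Set.Ioc (0:ℝ) 1, g t) = 0 := by
    show (∫ t, g t ∂μ) = 0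
    rw [hg]
    rw [integral_sub hs_int (hconst_int sb), MeasureTheory.integral_const]
    rw [measureReal_def, hμuniv]
    simp [hsbdef]
  have hkeyg := hkey g hgm ⟨1 + |sb|, hgb⟩ hg0
  have hφ_sub_int : Integrable (fun t => φ t - c) μ := hφ.sub (hconst_int c)
  have h1 : (∫ t, (φ t - c) ∂μ) = 0 := by
    rw [integral_sub hφ (hconst_int c), MeasureTheory.integral_const, measureReal_def,
      show (volume.restrict (Set.Ioc (0:ℝ) 1)) Set.univ = 1 from hμuniv]
    simp [hc]
  have hφg_int : Integrable (fun t => φ t * g t) μ :=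
    (Integrable.bdd_mul hφ hgm.aestronglyMeasurable
      (ae_of_all _ fun t => by simpa using hgb t)).congr
      (ae_of_all _ fun t => mul_comm _ _)
  have hφcs_int : Integrable (fun t => (φ t - c) * s t) μ :=
    (Integrable.bdd_mul hφ_sub_int hsmeas.aestronglyMeasurable
      (ae_of_all _ fun t => by simpa using hsb t)).congr (ae_of_all _ fun t => mul_comm _ _)
  have hg_int : Integrable g μ := hs_int.sub (hconst_int sb)
  have hφcg_int : Integrable (fun t => (φ t - c) * g t) μ :=
    (Integrable.bdd_mul hφ_sub_int hgm.aestronglyMeasurable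
      (ae_of_all _ fun t => by simpa using hgb t)).congr (ae_of_all _ fun t => mul_comm _ _)
  have h2 : (∫ t, (φ t - c) * g t ∂μ) = 0 := by
    have e : (∫ t, (φ t - c) * g t ∂μ) = ∫ t, (φ t * g t - c * g t) ∂μ := by
      congr 1; funext t; ring
    rw [e, integral_sub hφg_int (hg_int.const_mul c), MeasureTheory.integral_const_mul, hkeyg, hg0]
    simp
  have h3 : (∫ t, (φ t - c) * s t ∂μ) = 0 := by
    have e : (∫ t, (φ t - c) * s t ∂μ) = ∫ t, ((φ t - c) * g t + sb * (φ t - c)) ∂μ := by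
      congr 1; funext t; rw [hg]; ring
    rw [e, integral_add hφcg_int (hφ_sub_int.const_mul sb), h2, MeasureTheory.integral_const_mul, h1]
    ring
  have h4 : (fun t => (φ t - c) * s t) =ᵐ[μ] fun t => |φ t - c| := by
    filter_upwards [hψ] with t ht
    rw [hs]
    simp only
    rw [ht, mul_real_sign_self]
  have h5 : (∫ t, |φ t - c| ∂μ) = 0 := by rw [← integral_congr_ae h4]; exact h3
  have h6 : (fun t => |φ t - c|) =ᵐ[μ] 0 :=
    (integral_eq_zero_iff_of_nonneg_ae (ae_of_all _ fun t => abs_nonneg _)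
      (hφ_sub_int.abs)).mp h5
  filter_upwards [h6] with t ht
  have : |φ t - c| = 0 := ht
  have := abs_eq_zero.mp this
  linarith [this]


lemma fubini_ibp {f g : ℝ → ℝ} (hf : IntegrableOn f (Set.Ioc 0 1))
    (hg : IntegrableOn g (Set.Ioc 0 1)) :
    (∫ t in Set.Ioc (0:ℝ) 1, f t * ∫ s in Set.Ioc (0:ℝ) t, g s)
      + (∫ t in Set.Ioc (0:ℝ) 1, (∫ s in Set.Ioc (0:ℝ) t, f s) * g t)
      = (∫ t in Set.Ioc (0:ℝ) 1, f t) * ∫ s in Set.Ioc (0:ℝ) 1, g s := by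
  set μ := volume.restrict (Set.Ioc (0:ℝ) 1) with hμ
  have hfμ : Integrable f μ := hf
  have hgμ : Integrable g μ := hg
  have hfg : Integrable (fun p : ℝ × ℝ => f p.1 * g p.2) (μ.prod μ) := hfμ.mul_prod hgμ
  have hsle : MeasurableSet {p : ℝ × ℝ | p.2 ≤ p.1} := measurableSet_le measurable_snd measurable_fst
  have hsge : MeasurableSet {p : ℝ × ℝ | p.1 ≤ p.2} := measurableSet_le measurable_fst measurable_snd
  set K : ℝ × ℝ → ℝ := Set.indicator {p : ℝ × ℝ | p.2 ≤ p.1} (fun p => f p.1 * g p.2) with hK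
  set K' : ℝ × ℝ → ℝ := Set.indicator {p : ℝ × ℝ | p.1 ≤ p.2} (fun p => f p.1 * g p.2) with hK'
  have hKint : Integrable K (μ.prod μ) := hfg.indicator hsle
  have hK'int : Integrable K' (μ.prod μ) := hfg.indicator hsge
  -- inner integral rewriting
  have inner : ∀ h : ℝ → ℝ, ∀ t ∈ Set.Ioc (0:ℝ) 1,
      (∫ s in Set.Ioc (0:ℝ) t, h s) = ∫ s, Set.indicator (Set.Iic t) h s ∂μ := by
    intro h t ht
    have hset : Set.Iic t ∩ Set.Ioc 0 1 = Set.Ioc 0 t := by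
      ext s
      simp only [Set.mem_Ioc, Set.mem_inter_iff, Set.mem_Iic]
      constructor
      · rintro ⟨hs1, hs2, _⟩; exact ⟨hs2, hs1⟩
      · rintro ⟨hs1, hs2⟩; exact ⟨hs2, hs1, hs2.trans ht.2⟩
    rw [MeasureTheory.integral_indicator measurableSet_Iic, hμ,
      Measure.restrict_restrict measurableSet_Iic, hset]
  have term1 : (∫ t in Set.Ioc (0:ℝ) 1, f t * ∫ s in Set.Ioc (0:ℝ) t, g s)
      = ∫ p, K p ∂(μ.prod μ) := by
    have hunc : Integrable (Function.uncurry fun t s => K (t, s)) (μ.prod μ) := hKint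
    rw [show (∫ p, K p ∂(μ.prod μ)) = ∫ p : ℝ × ℝ, (fun t s => K (t, s)) p.1 p.2 ∂(μ.prod μ) from rfl,
      ← MeasureTheory.integral_integral hunc]
    apply setIntegral_congr_fun measurableSet_Ioc
    intro t ht
    dsimp only
    rw [inner g t ht, ← MeasureTheory.integral_const_mul]
    congr 1
    ext s
    by_cases hs : s ≤ t <;> simp [hK, Set.indicator, hs]
  have term2 : (∫ t in Set.Ioc (0:ℝ) 1, (∫ s in Set.Ioc (0:ℝ) t, f s) * g t)
      = ∫ p, K' p ∂(μ.prod μ) := by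
    have hsw : Integrable (fun p : ℝ × ℝ => K' p.swap) (μ.prod μ) := hK'int.swap
    have hunc : Integrable (Function.uncurry fun t s => K' (s, t)) (μ.prod μ) := hsw
    rw [show (∫ p, K' p ∂(μ.prod μ)) = ∫ p : ℝ × ℝ, K' p.swap ∂(μ.prod μ) from
      (MeasureTheory.integral_prod_swap K').symm,
      show (∫ p : ℝ × ℝ, K' p.swap ∂(μ.prod μ)) = ∫ p : ℝ × ℝ, (fun t s => K' (s, t)) p.1 p.2 ∂(μ.prod μ) from rfl,
      ← MeasureTheory.integral_integral hunc]
    apply setIntegral_congr_fun measurableSet_Ioc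
    intro t ht
    dsimp only
    rw [inner f t ht, ← MeasureTheory.integral_mul_const]
    congr 1
    ext s
    by_cases hs : s ≤ t <;> simp [hK', Set.indicator, hs]
  have hdiag : MeasurableSet {p : ℝ × ℝ | p.1 = p.2} :=
    (isClosed_eq continuous_fst continuous_snd).measurableSet
  have hdiag0 : (μ.prod μ) {p : ℝ × ℝ | p.1 = p.2} = 0 := by
    rw [Measure.prod_apply hdiag]
    have hpre : ∀ x : ℝ, μ (Prod.mk x ⁻¹' {p : ℝ × ℝ | p.1 = p.2}) = 0 := by
      intro x
      have hx : Prod.mk x ⁻¹' {p : ℝ × ℝ | p.1 = p.2} = {x} := by ext s; simp [eq_comm]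
      rw [hx, hμ, Measure.restrict_apply (measurableSet_singleton x)]
      exact measure_mono_null Set.inter_subset_left Real.volume_singleton
    simp [hpre]
  rw [term1, term2]
  calc (∫ p, K p ∂(μ.prod μ)) + ∫ p, K' p ∂(μ.prod μ)
      = ∫ p, (K p + K' p) ∂(μ.prod μ) := (integral_add hKint hK'int).symm
    _ = ∫ p, (f p.1 * g p.2
          + Set.indicator {q : ℝ × ℝ | q.1 = q.2} (fun q => f q.1 * g q.2) p) ∂(μ.prod μ) := by
        congr 1
        ext p
        rcases lt_trichotomy p.1 p.2 with h | h | h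
        · simp [hK, hK', Set.indicator, h.le, not_le.mpr h, h.ne]
        · simp [hK, hK', Set.indicator, h.le, h.ge, h]
        · simp [hK, hK', Set.indicator, h.le, not_le.mpr h, h.ne']
    _ = (∫ p : ℝ × ℝ, f p.1 * g p.2 ∂(μ.prod μ))
          + ∫ p, Set.indicator {q : ℝ × ℝ | q.1 = q.2} (fun q => f q.1 * g q.2) p ∂(μ.prod μ) :=
        integral_add hfg (hfg.indicator hdiag)
    _ = (∫ t in Set.Ioc (0:ℝ) 1, f t) * ∫ s in Set.Ioc (0:ℝ) 1, g s := by
        rw [MeasureTheory.integral_indicator hdiag, Measure.restrict_eq_zero.mpr hdiag0,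
          integral_zero_measure, add_zero, MeasureTheory.integral_prod_mul]


-- core version with globally continuous data
lemma gronwall_zero_core {A p : ℝ → ℝ} (hA : Continuous A) (hp : Continuous p)
    (heq : ∀ x ∈ Set.Icc (0:ℝ) 1,
      p x = (∫ t in (0:ℝ)..x, p t) * A x - ∫ t in (0:ℝ)..x, p t * A t) :
    ∀ x ∈ Set.Icc (0:ℝ) 1, p x = 0 := by
  obtain ⟨M, hM⟩ := isCompact_Icc.exists_bound_of_continuousOn
    (hA.continuousOn (s := Set.Icc (0:ℝ) 1))
  have hM0 : 0 ≤ M := le_trans (norm_nonneg _) (hM 0 ⟨le_rfl, zero_le_one⟩)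
  set G : ℝ → ℝ := fun x => ∫ t in (0:ℝ)..x, |p t| with hG
  have hpabs : Continuous fun t => |p t| := hp.abs
  have hG' : ∀ x : ℝ, HasDerivAt G (|p x|) x := fun x =>
    intervalIntegral.integral_hasDerivAt_right (hpabs.intervalIntegrable _ _)
      (hpabs.stronglyMeasurableAtFilter _ _) hpabs.continuousAt
  have hGnonneg : ∀ x ∈ Set.Icc (0:ℝ) 1, 0 ≤ G x := fun x hx =>
    intervalIntegral.integral_nonneg hx.1 (fun t _ => abs_nonneg _)
  have hbound : ∀ x ∈ Set.Icc (0:ℝ) 1, ‖|p x|‖ ≤ (2*M) * ‖G x‖ + 0 := by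
    intro x hx'
    have h1 : |∫ t in (0:ℝ)..x, p t| ≤ G x := by
      simpa using intervalIntegral.abs_integral_le_integral_abs hx'.1
    have h2 : |∫ t in (0:ℝ)..x, p t * A t| ≤ M * G x := by
      have hmono : (∫ t in (0:ℝ)..x, |p t * A t|) ≤ ∫ t in (0:ℝ)..x, M * |p t| := by
        apply intervalIntegral.integral_mono_on hx'.1
        · exact ((hp.mul hA).abs.intervalIntegrable _ _)
        · exact ((continuous_const.mul hpabs).intervalIntegrable _ _)
        · intro t ht
          have htI : t ∈ Set.Icc (0:ℝ) 1 := ⟨ht.1, ht.2.trans hx'.2⟩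
          rw [abs_mul, mul_comm M (|p t|)]
          exact mul_le_mul_of_nonneg_left (hM t htI) (abs_nonneg _)
      calc |∫ t in (0:ℝ)..x, p t * A t| ≤ ∫ t in (0:ℝ)..x, |p t * A t| :=
            intervalIntegral.abs_integral_le_integral_abs hx'.1
        _ ≤ ∫ t in (0:ℝ)..x, M * |p t| := hmono
        _ = M * G x := intervalIntegral.integral_const_mul _ _
    have hAx : |A x| ≤ M := hM x hx'
    have hkey : |p x| ≤ G x * M + M * G x := by
      rw [heq x hx']
      calc |(∫ t in (0:ℝ)..x, p t) * A x - ∫ t in (0:ℝ)..x, p t * A t|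
          ≤ |(∫ t in (0:ℝ)..x, p t) * A x| + |∫ t in (0:ℝ)..x, p t * A t| := abs_sub _ _
        _ ≤ G x * M + M * G x := by
            rw [abs_mul]
            exact add_le_add
              (mul_le_mul h1 hAx (abs_nonneg _) (hGnonneg x hx')) h2
    rw [Real.norm_eq_abs (|p x|), abs_abs, Real.norm_of_nonneg (hGnonneg x hx'), add_zero]
    nlinarith [hGnonneg x hx']
  have hle := norm_le_gronwallBound_of_norm_deriv_right_le
    (f := G) (f' := fun x => |p x|) (δ := 0) (K := 2*M) (ε := 0) (a := 0) (b := 1)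
    (HasDerivAt.continuousOn (fun x _ => hG' x))
    (fun x _ => (hG' x).hasDerivWithinAt) (by simp [hG])
    (fun x hx => hbound x ⟨hx.1, hx.2.le⟩)
  intro x hx
  have hGx0 : G x = 0 := by
    have hthis := hle x hx
    rw [gronwallBound_ε0] at hthis
    simp only [zero_mul] at hthis
    exact le_antisymm (by simpa [Real.norm_of_nonneg (hGnonneg x hx)] using hthis)
      (hGnonneg x hx)
  have hb := hbound x hx
  rw [Real.norm_eq_abs (|p x|), abs_abs, add_zero, Real.norm_of_nonneg (hGnonneg x hx), hGx0,
    mul_zero] at hb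
  exact abs_nonpos_iff.mp hb

/-- clamp to `[0,1]` -/
noncomputable def cl01 (t : ℝ) : ℝ := max 0 (min t 1)

lemma cl01_cont : Continuous cl01 := continuous_const.max (continuous_id.min continuous_const)

lemma cl01_mem (t : ℝ) : cl01 t ∈ Set.Icc (0:ℝ) 1 :=
  ⟨le_max_left _ _, max_le (zero_le_one) (min_le_right _ _)⟩

lemma cl01_eq {t : ℝ} (ht : t ∈ Set.Icc (0:ℝ) 1) : cl01 t = t := by
  simp only [cl01, min_eq_left ht.2, max_eq_right ht.1]

-- ContinuousOn version
lemma gronwall_zero {A p : ℝ → ℝ} (hA : ContinuousOn A (Set.Icc 0 1))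
    (hp : ContinuousOn p (Set.Icc 0 1))
    (heq : ∀ x ∈ Set.Icc (0:ℝ) 1,
      p x = (∫ t in (0:ℝ)..x, p t) * A x - ∫ t in (0:ℝ)..x, p t * A t) :
    ∀ x ∈ Set.Icc (0:ℝ) 1, p x = 0 := by
  set Ac : ℝ → ℝ := A ∘ cl01 with hAc
  set pc : ℝ → ℝ := p ∘ cl01 with hpc
  have hAcont : Continuous Ac := hA.comp_continuous cl01_cont cl01_mem
  have hpcont : Continuous pc := hp.comp_continuous cl01_cont cl01_mem
  have hcongr : ∀ x ∈ Set.Icc (0:ℝ) 1, (∫ t in (0:ℝ)..x, pc t) = ∫ t in (0:ℝ)..x, p t := by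
    intro x hx
    apply intervalIntegral.integral_congr
    intro t ht
    rw [Set.uIcc_of_le hx.1] at ht
    simp only [hpc, Function.comp_apply, cl01_eq ⟨ht.1, ht.2.trans hx.2⟩]
  have hcongr2 : ∀ x ∈ Set.Icc (0:ℝ) 1,
      (∫ t in (0:ℝ)..x, pc t * Ac t) = ∫ t in (0:ℝ)..x, p t * A t := by
    intro x hx
    apply intervalIntegral.integral_congr
    intro t ht
    rw [Set.uIcc_of_le hx.1] at ht
    simp only [hpc, hAc, Function.comp_apply, cl01_eq ⟨ht.1, ht.2.trans hx.2⟩]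
  have := gronwall_zero_core hAcont hpcont (fun x hx => by
    have e1 : pc x = p x := by simp [hpc, cl01_eq hx]
    have e2 : Ac x = A x := by simp [hAc, cl01_eq hx]
    rw [e1, e2, hcongr x hx, hcongr2 x hx]
    exact heq x hx)
  intro x hx
  have hx' := this x hx
  simpa only [hpc, Function.comp_apply, cl01_eq hx] using hx'


lemma key_integral (B w gw : ℝ → ℝ) (hB : ContinuousOn B (Set.Icc 0 1))
    (hw : MemH1 w gw) (hzero : ∀ h g : ℝ → ℝ, MemH1 h g → Eform B w gw h g = 0)
    (g : ℝ → ℝ) (hgm : Measurable g) (C : ℝ) (hgb : ∀ t, |g t| ≤ C)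
    (hg0 : (∫ t in Set.Ioc (0:ℝ) 1, g t) = 0) :
    ∫ t in Set.Ioc (0:ℝ) 1,
      (gw t + (∫ s in Set.Ioc (0:ℝ) t, gw s * B s) - w t * B t) * g t = 0 := by
  obtain ⟨hgwI, hgw1, hwx⟩ := hw
  -- g is interval integrable everywhere
  have hgInt : ∀ a b : ℝ, IntervalIntegrable g volume a b := by
    intro a b
    rw [intervalIntegrable_iff]
    exact Integrable.mono' (integrableOn_const measure_Ioc_lt_top.ne)
      hgm.aestronglyMeasurable (ae_of_all _ fun t => by simpa using hgb t)
  have hgIcc : IntegrableOn g (Set.Icc (0:ℝ) 1) := by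
    exact Integrable.mono' (integrableOn_const measure_Icc_lt_top.ne)
      hgm.aestronglyMeasurable (ae_of_all _ fun t => by simpa using hgb t)
  have hgIoc : IntegrableOn g (Set.Ioc (0:ℝ) 1) := hgIcc.mono_set Set.Ioc_subset_Icc_self
  set h : ℝ → ℝ := fun x => ∫ t in (0:ℝ)..x, g t with hh
  have hmem : MemH1 h g :=
    ⟨hgIcc, by rw [intervalIntegral.integral_of_le zero_le_one]; exact hg0, fun x _ => rfl⟩
  have hcont_h : Continuous h := intervalIntegral.continuous_primitive hgInt 0
  have hE := hzero h g hmem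
  unfold Eform at hE
  -- continuity of w on Icc
  have wcont : ContinuousOn w (Set.Icc (0:ℝ) 1) := by
    have hcp : ContinuousOn (fun x => ∫ t in Set.Icc (0:ℝ) x, gw t) (Set.Icc (0:ℝ) 1) :=
      intervalIntegral.continuousOn_primitive_Icc hgwI
    apply hcp.congr
    intro x hx
    rw [hwx x hx, intervalIntegral.integral_of_le hx.1, ← integral_Icc_eq_integral_Ioc]
  -- F
  set Fi : ℝ → ℝ := fun t => ∫ s in Set.Ioc (0:ℝ) t, gw s * B s with hFi
  have hgwB : IntegrableOn (fun t => gw t * B t) (Set.Icc (0:ℝ) 1) :=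
    hgwI.mul_continuousOn hB isCompact_Icc
  have Ficont : ContinuousOn Fi (Set.Icc (0:ℝ) 1) := by
    have hcp : ContinuousOn (fun x => ∫ t in Set.Icc (0:ℝ) x, gw t * B t) (Set.Icc (0:ℝ) 1) :=
      intervalIntegral.continuousOn_primitive_Icc hgwB
    apply hcp.congr
    intro x _
    show (∫ s in Set.Ioc (0:ℝ) x, gw s * B s) = ∫ t in Set.Icc (0:ℝ) x, gw t * B t
    rw [integral_Icc_eq_integral_Ioc]
  -- integrabilities on Ioc 0 1
  have intI1 : Integrable (fun t => g t * gw t) (volume.restrict (Set.Ioc (0:ℝ) 1)) :=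
    Integrable.bdd_mul (hgwI.mono_set Set.Ioc_subset_Icc_self)
      hgm.aestronglyMeasurable (ae_of_all _ fun t => by simpa using hgb t)
  have intI2 : IntegrableOn (fun t => g t * Fi t) (Set.Ioc (0:ℝ) 1) :=
    (hgIcc.mul_continuousOn Ficont isCompact_Icc).mono_set Set.Ioc_subset_Icc_self
  have intI2' : IntegrableOn (fun t => Fi t * g t) (Set.Ioc (0:ℝ) 1) :=
    intI2.congr (ae_of_all _ fun t => mul_comm _ _)
  have intI3 : IntegrableOn (fun t => g t * (w t * B t)) (Set.Ioc (0:ℝ) 1) :=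
    (hgIcc.mul_continuousOn (wcont.mul hB) isCompact_Icc).mono_set Set.Ioc_subset_Icc_self
  have intI4 : IntegrableOn (fun t => gw t * B t * h t) (Set.Ioc (0:ℝ) 1) :=
    (hgwB.mul_continuousOn hcont_h.continuousOn isCompact_Icc).mono_set Set.Ioc_subset_Icc_self
  set I1 : ℝ := ∫ t in Set.Ioc (0:ℝ) 1, g t * gw t with hI1
  set I2 : ℝ := ∫ t in Set.Ioc (0:ℝ) 1, Fi t * g t with hI2
  set I3 : ℝ := ∫ t in Set.Ioc (0:ℝ) 1, g t * (w t * B t) with hI3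
  set I4 : ℝ := ∫ t in Set.Ioc (0:ℝ) 1, gw t * B t * h t with hI4
  -- rewrite hE
  have hE' : I1 - (I4 + I3) = 0 := by
    have e1 : (∫ x in (0:ℝ)..1, gw x * g x) = I1 := by
      rw [intervalIntegral.integral_of_le zero_le_one, hI1]
      exact setIntegral_congr_fun measurableSet_Ioc fun x _ => mul_comm _ _
    have e2 : (∫ x in (0:ℝ)..1, (gw x * h x + w x * g x) * B x) = I4 + I3 := by
      rw [intervalIntegral.integral_of_le zero_le_one, hI4, hI3, ← integral_add intI4 intI3]
      exact setIntegral_congr_fun measurableSet_Ioc fun x _ => by ring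
    rw [e1, e2] at hE
    exact hE
  -- Fubini identity
  have hfub : I4 + I2 = 0 := by
    have hfb := fubini_ibp (hgwB.mono_set Set.Ioc_subset_Icc_self) hgIoc
    rw [hg0, mul_zero] at hfb
    have e4 : (∫ t in Set.Ioc (0:ℝ) 1, (gw t * B t) * ∫ s in Set.Ioc (0:ℝ) t, g s) = I4 := by
      rw [hI4]
      apply setIntegral_congr_fun measurableSet_Ioc
      intro t ht
      rw [hh]
      simp only
      rw [intervalIntegral.integral_of_le ht.1.le]
    rw [e4] at hfb
    exact hfb
  -- conclusion
  have intI12 : IntegrableOn (fun t => g t * gw t + Fi t * g t) (Set.Ioc (0:ℝ) 1) :=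
    intI1.add intI2'
  have hadd : (∫ t in Set.Ioc (0:ℝ) 1, (g t * gw t + Fi t * g t)) = I1 + I2 :=
    integral_add intI1 intI2'
  have hsub : (∫ t in Set.Ioc (0:ℝ) 1, (g t * gw t + Fi t * g t - g t * (w t * B t)))
      = I1 + I2 - I3 := by
    rw [integral_sub intI12 intI3, hadd]
  have hgoal : (∫ t in Set.Ioc (0:ℝ) 1, (gw t + Fi t - w t * B t) * g t) = I1 + I2 - I3 := by
    rw [← hsub]
    exact setIntegral_congr_fun measurableSet_Ioc fun t _ => by ring
  rw [hgoal]
  linarith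


end AuxiliaryLemmas

/-- Uniqueness of the weak solution of the homogeneous Dirichlet problem `Lw = 0`:
if `w ∈ H1` satisfies `E(w,h) = 0` for every `h ∈ H1`, then `w ≡ 0` on `[0,1]`. -/
theorem weak_homogeneous_unique (B : ℝ → ℝ)
    (hB : ContinuousOn B (Set.Icc 0 1)) (hB0 : B 0 = 0)
    (hex : ∃ u u' v v' : ℝ → ℝ, IsBSolution B u u' ∧ IsBSolution B v v' ∧
      u 0 = 0 ∧ u 1 = 1 ∧ v 0 = 1 ∧ v 1 = 0)
    (w gw : ℝ → ℝ) (hw : MemH1 w gw)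
    (hzero : ∀ h g : ℝ → ℝ, MemH1 h g → Eform B w gw h g = 0) :
    ∀ x ∈ Set.Icc (0:ℝ) 1, w x = 0 := by
  obtain ⟨u, u1, v, v1, hu, hv, hu0, hu1, hv0, hv1⟩ := hex
  obtain ⟨hud, huc, hue⟩ := hu
  obtain ⟨hgwI, hgw1, hwx⟩ := hw
  set μ := volume.restrict (Set.Ioc (0:ℝ) 1) with hμ
  set Fi : ℝ → ℝ := fun t => ∫ s in Set.Ioc (0:ℝ) t, gw s * B s with hFidef
  set φ : ℝ → ℝ := fun t => gw t + Fi t - w t * B t with hφdef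
  -- continuity of w on Icc
  have wcont : ContinuousOn w (Set.Icc (0:ℝ) 1) := by
    have hcp : ContinuousOn (fun x => ∫ t in Set.Icc (0:ℝ) x, gw t) (Set.Icc (0:ℝ) 1) :=
      intervalIntegral.continuousOn_primitive_Icc hgwI
    apply hcp.congr
    intro x hx
    rw [hwx x hx, intervalIntegral.integral_of_le hx.1, ← integral_Icc_eq_integral_Ioc]
  have hgwB : IntegrableOn (fun t => gw t * B t) (Set.Icc (0:ℝ) 1) :=
    hgwI.mul_continuousOn hB isCompact_Icc
  have Ficont : ContinuousOn Fi (Set.Icc (0:ℝ) 1) := by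
    have hcp : ContinuousOn (fun x => ∫ t in Set.Icc (0:ℝ) x, gw t * B t) (Set.Icc (0:ℝ) 1) :=
      intervalIntegral.continuousOn_primitive_Icc hgwB
    apply hcp.congr
    intro x _
    show (∫ s in Set.Ioc (0:ℝ) x, gw s * B s) = ∫ t in Set.Icc (0:ℝ) x, gw t * B t
    rw [integral_Icc_eq_integral_Ioc]
  have hφI : IntegrableOn φ (Set.Ioc (0:ℝ) 1) := by
    apply Integrable.sub
    · exact (hgwI.mono_set Set.Ioc_subset_Icc_self).add
        ((Ficont.integrableOn_compact isCompact_Icc).mono_set Set.Ioc_subset_Icc_self)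
    · exact (((wcont.mul hB).integrableOn_compact isCompact_Icc).mono_set
        Set.Ioc_subset_Icc_self)
  have hkey' : ∀ g : ℝ → ℝ, Measurable g → (∃ C, ∀ t, |g t| ≤ C) →
      (∫ t in Set.Ioc (0:ℝ) 1, g t) = 0 → (∫ t in Set.Ioc (0:ℝ) 1, φ t * g t) = 0 := by
    rintro g hgm ⟨C, hC⟩ hg0
    exact key_integral B w gw hB ⟨hgwI, hgw1, hwx⟩ hzero g hgm C hC hg0
  have hφc := phi_ae_const hφI hkey'
  set c : ℝ := ∫ t in Set.Ioc (0:ℝ) 1, φ t with hcdef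
  -- the classical derivative of w
  set F : ℝ → ℝ := fun x => ∫ t in (0:ℝ)..x, gw t * B t with hFdef
  set w' : ℝ → ℝ := fun x => c + w x * B x - F x with hw'def
  have hFeqFi : ∀ x ∈ Set.Icc (0:ℝ) 1, F x = Fi x := by
    intro x hx
    show (∫ t in (0:ℝ)..x, gw t * B t) = ∫ s in Set.Ioc (0:ℝ) x, gw s * B s
    rw [intervalIntegral.integral_of_le hx.1]
  have haegw : gw =ᵐ[μ] w' := by
    filter_upwards [hφc, ae_restrict_mem measurableSet_Ioc] with t hφt htmem
    have hFt : F t = Fi t := hFeqFi t ⟨htmem.1.le, htmem.2⟩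
    have hφt' : gw t + Fi t - w t * B t = c := hφt
    show gw t = c + w t * B t - F t
    rw [hFt]
    linarith
  have haegwB : (fun t => gw t * B t) =ᵐ[μ] fun t => w' t * B t := by
    filter_upwards [haegw] with t ht
    rw [ht]
  have hIntSwap : ∀ f f' : ℝ → ℝ, f =ᵐ[μ] f' → ∀ x ∈ Set.Icc (0:ℝ) 1,
      (∫ t in (0:ℝ)..x, f t) = ∫ t in (0:ℝ)..x, f' t := by
    intro f f' hff x hx
    rw [intervalIntegral.integral_of_le hx.1, intervalIntegral.integral_of_le hx.1]
    apply setIntegral_congr_ae measurableSet_Ioc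
    have hff' := (ae_restrict_iff' measurableSet_Ioc).mp hff
    filter_upwards [hff'] with t ht hmem
    exact ht ⟨hmem.1, hmem.2.trans hx.2⟩
  have hww' : ∀ x ∈ Set.Icc (0:ℝ) 1, w x = ∫ t in (0:ℝ)..x, w' t :=
    fun x hx => (hwx x hx).trans (hIntSwap _ _ haegw x hx)
  have hFw' : ∀ x ∈ Set.Icc (0:ℝ) 1, F x = ∫ t in (0:ℝ)..x, w' t * B t :=
    fun x hx => hIntSwap _ _ haegwB x hx
  have Fcont : ContinuousOn F (Set.Icc (0:ℝ) 1) := Ficont.congr hFeqFi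
  have w'cont : ContinuousOn w' (Set.Icc (0:ℝ) 1) :=
    (continuousOn_const.add (wcont.mul hB)).sub Fcont
  have hw1 : w 1 = 0 := by
    rw [hwx 1 ⟨zero_le_one, le_rfl⟩]; exact hgw1
  -- u facts
  have hucont : ContinuousOn u (Set.Icc (0:ℝ) 1) :=
    fun x hx => (hud x hx).continuousWithinAt
  have huFTC : ∀ x ∈ Set.Icc (0:ℝ) 1, u x = ∫ t in (0:ℝ)..x, u1 t := by
    intro x hx
    have hsub : Set.Icc (0:ℝ) x ⊆ Set.Icc 0 1 := Set.Icc_subset_Icc le_rfl hx.2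
    have hix : IntervalIntegrable u1 volume 0 x :=
      (huc.mono (by rw [Set.uIcc_of_le hx.1]; exact hsub)).intervalIntegrable
    have hkey := intervalIntegral.integral_eq_sub_of_hasDeriv_right_of_le hx.1
      (hucont.mono hsub)
      (fun y hy => ((hud y ⟨hy.1.le, hy.2.le.trans hx.2⟩).hasDerivAt
        (Icc_mem_nhds hy.1 (lt_of_lt_of_le hy.2 hx.2))).hasDerivWithinAt)
      hix
    rw [hu0, sub_zero] at hkey
    exact hkey.symm
  have hα : u1 0 ≠ 0 := by
    intro h0
    have hz := gronwall_zero hB huc (fun x hx => by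
      rw [hue x hx, h0, ← huFTC x hx]
      ring)
    have hone : u 1 = 0 := by
      rw [huFTC 1 ⟨zero_le_one, le_rfl⟩]
      rw [intervalIntegral.integral_congr (g := fun _ => (0:ℝ))
        (fun t ht => hz t (by rwa [Set.uIcc_of_le zero_le_one] at ht))]
      simp
    rw [hu1] at hone
    exact one_ne_zero hone
  -- the combination p = α·w' - c·u1
  set α : ℝ := u1 0 with hαdef
  set p : ℝ → ℝ := fun x => α * w' x - c * u1 x with hpdef
  have hpcont : ContinuousOn p (Set.Icc (0:ℝ) 1) :=
    (continuousOn_const.mul w'cont).sub (continuousOn_const.mul huc)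
  have hiw' : ∀ x ∈ Set.Icc (0:ℝ) 1, IntervalIntegrable w' volume 0 x := fun x hx =>
    (w'cont.mono (by rw [Set.uIcc_of_le hx.1]; exact Set.Icc_subset_Icc le_rfl hx.2)).intervalIntegrable
  have hiu1 : ∀ x ∈ Set.Icc (0:ℝ) 1, IntervalIntegrable u1 volume 0 x := fun x hx =>
    (huc.mono (by rw [Set.uIcc_of_le hx.1]; exact Set.Icc_subset_Icc le_rfl hx.2)).intervalIntegrable
  have hlin : ∀ x ∈ Set.Icc (0:ℝ) 1, (∫ t in (0:ℝ)..x, p t) = α * w x - c * u x := by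
    intro x hx
    rw [hww' x hx, huFTC x hx, ← intervalIntegral.integral_const_mul,
      ← intervalIntegral.integral_const_mul,
      ← intervalIntegral.integral_sub ((hiw' x hx).const_mul α) ((hiu1 x hx).const_mul c)]
  have heqp : ∀ x ∈ Set.Icc (0:ℝ) 1,
      p x = (∫ t in (0:ℝ)..x, p t) * B x - ∫ t in (0:ℝ)..x, p t * B t := by
    intro x hx
    have hiw'B : IntervalIntegrable (fun t => w' t * B t) volume 0 x :=
      ((w'cont.mul hB).mono (by rw [Set.uIcc_of_le hx.1]; exact Set.Icc_subset_Icc le_rfl hx.2)).intervalIntegrable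
    have hiu1B : IntervalIntegrable (fun t => u1 t * B t) volume 0 x :=
      ((huc.mul hB).mono (by rw [Set.uIcc_of_le hx.1]; exact Set.Icc_subset_Icc le_rfl hx.2)).intervalIntegrable
    have hpB : (∫ t in (0:ℝ)..x, p t * B t)
        = α * (∫ t in (0:ℝ)..x, w' t * B t) - c * ∫ t in (0:ℝ)..x, u1 t * B t := by
      rw [← intervalIntegral.integral_const_mul, ← intervalIntegral.integral_const_mul,
        ← intervalIntegral.integral_sub (hiw'B.const_mul α) (hiu1B.const_mul c)]
      apply intervalIntegral.integral_congr
      intro t _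
      show p t * B t = α * (w' t * B t) - c * (u1 t * B t)
      rw [hpdef]
      ring
    rw [hlin x hx, hpB, ← hFw' x hx]
    have h1 := hue x hx
    have h2 : w' x = c + w x * B x - F x := rfl
    show α * w' x - c * u1 x = (α * w x - c * u x) * B x - (α * F x - c * ∫ t in (0:ℝ)..x, u1 t * B t)
    rw [h2, h1, hαdef]
    ring
  have hp0 := gronwall_zero hB hpcont heqp
  have hend : ∀ x ∈ Set.Icc (0:ℝ) 1, α * w x - c * u x = 0 := by
    intro x hx
    rw [← hlin x hx]
    rw [intervalIntegral.integral_congr (g := fun _ => (0:ℝ))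
      (fun t ht => hp0 t (by rw [Set.uIcc_of_le hx.1] at ht; exact ⟨ht.1, ht.2.trans hx.2⟩))]
    simp
  have hc0 : c = 0 := by
    have h1 := hend 1 ⟨zero_le_one, le_rfl⟩
    rw [hw1, hu1] at h1
    linarith
  intro x hx
  have hx2 := hend x hx
  rw [hc0] at hx2
  have hx3 : α * w x = 0 := by linarith
  rcases mul_eq_zero.mp hx3 with h | h
  · exact absurd h hα
  · exact h
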